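/- arXiv:2402.10703 — 5 statements merged into one kernel-verified Lean document; each statement's English description precedes it below -/
import Mathlib

section
/- Fix s ∈ (0,1) and a natural number m. Then lim_{k→∞} sup_{w ∈ 𝔻_s} k^m · |w|^{k−m} · |w − 1|^{4m+2} = 0, where the limit is over integers k > m. -/
open Real Filter

lemma aux_exp_bound (A : ℝ) (hA0 : 0 ≤ A) (hA1 : A ≤ 1) (n p : ℕ)
    (hn : 0 < n) (hp : 0 < p) :
    A ^ n * (1 - A) ^ p ≤ ((p : ℝ) / n) ^ p := by
  set t : ℝ := n * (1 - A) with ht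
  have ht0 : 0 ≤ t := mul_nonneg (Nat.cast_nonneg n) (by linarith)
  have h1 : A ^ n ≤ Real.exp (-t) := by
    have hA : A ≤ Real.exp (A - 1) := by
      have := Real.add_one_le_exp (A - 1); linarith
    calc A ^ n ≤ Real.exp (A - 1) ^ n := pow_le_pow_left₀ hA0 hA n
      _ = Real.exp (n * (A - 1)) := by rw [← Real.exp_nat_mul]
      _ = Real.exp (-t) := by rw [ht]; ring_nf
  have hp' : (0:ℝ) < p := Nat.cast_pos.mpr hp
  have hn' : (0:ℝ) < n := Nat.cast_pos.mpr hn
  have h2 : t ^ p ≤ (p : ℝ) ^ p * Real.exp t := by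
    have h3 : t ≤ p * Real.exp (t / p) := by
      have h0 := Real.add_one_le_exp (t / p)
      have h4 : t / p ≤ Real.exp (t / p) := by linarith
      calc t = p * (t / p) := by field_simp
        _ ≤ p * Real.exp (t / p) := mul_le_mul_of_nonneg_left h4 hp'.le
    calc t ^ p ≤ ((p:ℝ) * Real.exp (t / p)) ^ p := pow_le_pow_left₀ ht0 h3 p
      _ = (p:ℝ) ^ p * Real.exp t := by
          rw [mul_pow, ← Real.exp_nat_mul]
          congr 2
          field_simp
  have h5 : (1 - A) ^ p = t ^ p / (n:ℝ) ^ p := by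
    rw [ht, mul_pow]
    field_simp
  calc A ^ n * (1 - A) ^ p ≤ Real.exp (-t) * (t ^ p / (n:ℝ)^p) := by
        rw [← h5]
        exact mul_le_mul_of_nonneg_right h1 (pow_nonneg (by linarith) p)
    _ ≤ Real.exp (-t) * ((p:ℝ)^p * Real.exp t / (n:ℝ)^p) := by
        gcongr
    _ = ((p:ℝ)/n)^p := by
        rw [Real.exp_neg, div_pow]
        field_simp [Real.exp_ne_zero]

lemma disc_bound (s : ℝ) (hs0 : 0 < s) (hs1 : s < 1) (w : ℂ)
    (hw : ‖w - (1 - (s : ℂ))‖ ≤ s) :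
    ‖w‖ ≤ 1 ∧
    ‖w - 1‖ ^ 2 ≤ (2 * s / (1 - s)) * (1 - ‖w‖) := by
  have h2 : ‖w - (1 - (s:ℂ))‖ ^ 2 ≤ s ^ 2 :=
    pow_le_pow_left₀ (norm_nonneg _) hw 2
  rw [Complex.sq_norm, Complex.normSq_apply] at h2
  simp only [Complex.sub_re, Complex.sub_im, Complex.one_re, Complex.one_im,
    Complex.ofReal_re, Complex.ofReal_im] at h2
  have hA2 : ‖w‖ ^ 2 = w.re ^ 2 + w.im ^ 2 := by
    rw [Complex.sq_norm, Complex.normSq_apply]; ring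
  have hW2 : ‖w - 1‖ ^ 2 = (w.re - 1) ^ 2 + w.im ^ 2 := by
    rw [Complex.sq_norm, Complex.normSq_apply]
    simp [Complex.sub_re, Complex.sub_im]
    ring
  have hre : w.re ≤ ‖w‖ := Complex.re_le_norm w
  have hA0 : 0 ≤ ‖w‖ := norm_nonneg w
  have hA1 : ‖w‖ ≤ 1 := by
    nlinarith [sq_nonneg (‖w‖ - 1), sq_nonneg w.im]
  refine ⟨hA1, ?_⟩
  rw [div_mul_eq_mul_div, le_div_iff₀ (by linarith : (0:ℝ) < 1 - s)]
  nlinarith [mul_nonneg hs0.le (sq_nonneg (1 - ‖w‖)), sq_nonneg w.im]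

/-- For fixed `s ∈ (0,1)` and `m ∈ ℕ`,
`sup_{w ∈ 𝔻_s} k^m * |w|^(k-m) * |w-1|^(4m+2) → 0` as `k → ∞`, where
`𝔻_s = {w : |w - (1-s)| ≤ s}` is the closed disc of radius `s` centred at `1 - s`. -/
theorem stmt3 (s : ℝ) (hs : s ∈ Set.Ioo (0 : ℝ) 1) (m : ℕ) :
    Filter.Tendsto
      (fun k : ℕ => sSup ((fun w : ℂ =>
          (k : ℝ) ^ m * ‖w‖ ^ (k - m) * ‖w - 1‖ ^ (4 * m + 2)) ''
        {w : ℂ | ‖w - (1 - (s : ℂ))‖ ≤ s}))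
      Filter.atTop (nhds 0) := by
  obtain ⟨hs0, hs1⟩ := hs
  set c : ℝ := 2 * s / (1 - s) with hc
  have hc0 : 0 ≤ c := div_nonneg (by linarith) (by linarith)
  set p : ℕ := 2 * m + 1 with hp
  set C : ℝ := c ^ p * (2 * (p:ℝ)) ^ p with hC
  have hC0 : 0 ≤ C := mul_nonneg (pow_nonneg hc0 p) (pow_nonneg (by positivity) p)
  have h1mem : (1:ℂ) ∈ {w : ℂ | ‖w - (1 - (s:ℂ))‖ ≤ s} := by
    have : (1:ℂ) - (1 - (s:ℂ)) = (s:ℂ) := by ring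
    simp only [Set.mem_setOf_eq, this, Complex.norm_real, Real.norm_eq_abs, abs_of_pos hs0, le_refl]
  have hCdiv : Filter.Tendsto (fun k : ℕ => C / (k:ℝ)) Filter.atTop (nhds 0) :=
    tendsto_const_div_atTop_nhds_zero_nat C
  have bound : ∀ k : ℕ, 2*m+2 ≤ k → ∀ x ∈ ((fun w : ℂ =>
        (k : ℝ) ^ m * ‖w‖ ^ (k - m) * ‖w - 1‖ ^ (4 * m + 2)) ''
      {w : ℂ | ‖w - (1 - (s : ℂ))‖ ≤ s}), x ≤ C / k := by
    intro k hk
    rintro x ⟨w, hw, rfl⟩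
    obtain ⟨hA1, hq⟩ := disc_bound s hs0 hs1 w hw
    have hA0 : 0 ≤ ‖w‖ := norm_nonneg w
    have hmk : m < k := by omega
    have hn1 : 1 ≤ k - m := by omega
    have hncast : ((k - m : ℕ) : ℝ) = (k:ℝ) - m := by
      rw [Nat.cast_sub hmk.le]
    have hkhalf : (k:ℝ)/2 ≤ ((k - m : ℕ) : ℝ) := by
      rw [hncast]
      have : (2*m : ℝ) ≤ k := by exact_mod_cast (by omega : 2*m ≤ k)
      linarith
    have hk1 : (1:ℝ) ≤ k := by exact_mod_cast (by omega : 1 ≤ k)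
    have hkpos : (0:ℝ) < k := by linarith
    have hcA : 0 ≤ c * (1 - ‖w‖) :=
      mul_nonneg hc0 (by linarith)
    have hstep1 : ‖w - 1‖ ^ (4 * m + 2) = (‖w - 1‖ ^ 2) ^ p := by
      rw [← pow_mul]
      congr 1
      omega
    have hd : ((p:ℝ)) / ((k - m : ℕ) : ℝ) ≤ (2 * (p:ℝ)) / (k:ℝ) := by
      have h1 : ((p:ℝ)) / ((k - m : ℕ) : ℝ) ≤ (p:ℝ) / ((k:ℝ)/2) :=
        div_le_div_of_nonneg_left (by positivity) (by linarith) hkhalf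
      have h2 : (p:ℝ) / ((k:ℝ)/2) = (2 * (p:ℝ)) / (k:ℝ) := by
        field_simp
      linarith
    have hdiv : (k:ℝ)^m / (k:ℝ)^p ≤ 1 / (k:ℝ) := by
      rw [div_le_div_iff₀ (by positivity) hkpos]
      have hkp : (k:ℝ)^(m+1) ≤ (k:ℝ)^p := pow_le_pow_right₀ hk1 (by omega)
      calc (k:ℝ)^m * (k:ℝ) = (k:ℝ)^(m+1) := by ring
        _ ≤ (k:ℝ)^p := hkp
        _ = 1 * (k:ℝ)^p := by ring
    calc (k : ℝ) ^ m * ‖w‖ ^ (k - m) * ‖w - 1‖ ^ (4 * m + 2)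
        = (k : ℝ) ^ m * ‖w‖ ^ (k - m) * (‖w - 1‖ ^ 2) ^ p := by
          rw [hstep1]
      _ ≤ (k : ℝ) ^ m * ‖w‖ ^ (k - m) * (c * (1 - ‖w‖)) ^ p :=
          mul_le_mul_of_nonneg_left (pow_le_pow_left₀ (sq_nonneg _) hq p)
            (mul_nonneg (pow_nonneg hkpos.le m) (pow_nonneg hA0 _))
      _ = (k : ℝ) ^ m * c ^ p * (‖w‖ ^ (k - m) * (1 - ‖w‖) ^ p) := by
          rw [mul_pow]; ring
      _ ≤ (k : ℝ) ^ m * c ^ p * ((p : ℝ) / ((k - m : ℕ) : ℝ)) ^ p :=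
          mul_le_mul_of_nonneg_left
            (aux_exp_bound _ hA0 hA1 _ _ (by omega) (by omega))
            (mul_nonneg (pow_nonneg hkpos.le m) (pow_nonneg hc0 p))
      _ ≤ (k : ℝ) ^ m * c ^ p * ((2 * (p:ℝ)) / (k:ℝ)) ^ p :=
          mul_le_mul_of_nonneg_left (pow_le_pow_left₀ (by positivity) hd p)
            (mul_nonneg (pow_nonneg hkpos.le m) (pow_nonneg hc0 p))
      _ = c ^ p * (2 * (p:ℝ)) ^ p * ((k:ℝ)^m / (k:ℝ)^p) := by
          rw [div_pow]; ring
      _ ≤ c ^ p * (2 * (p:ℝ)) ^ p * (1 / (k:ℝ)) :=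
          mul_le_mul_of_nonneg_left hdiv
            (mul_nonneg (pow_nonneg hc0 p) (by positivity))
      _ = C / k := by rw [hC]; ring
  apply tendsto_of_tendsto_of_tendsto_of_le_of_le' tendsto_const_nhds hCdiv
  · -- lower bound eventually
    filter_upwards [Filter.eventually_ge_atTop (2*m+2)] with k hk
    have hne : (0:ℝ) ∈ ((fun w : ℂ =>
          (k : ℝ) ^ m * ‖w‖ ^ (k - m) * ‖w - 1‖ ^ (4 * m + 2)) ''
        {w : ℂ | ‖w - (1 - (s : ℂ))‖ ≤ s}) := by
      refine ⟨1, h1mem, ?_⟩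
      simp
    exact le_csSup ⟨C / k, fun x hx => bound k hk x hx⟩ hne
  · -- upper bound eventually
    filter_upwards [Filter.eventually_ge_atTop (2*m+2)] with k hk
    exact csSup_le ⟨_, ⟨1, h1mem, rfl⟩⟩ (bound k hk)
end

section
/- Fix s ∈ (0,1). There exists a constant C > 0 (depending only on s) such that for every integer k ≥ 4 and every w ∈ 𝔻_s \ V_{s,k}, one has |w| ≤ (1 + C·k^{−1/2})^{−1/2}. -/
set_option maxHeartbeats 1000000

lemma cos_upper5 (θ : ℝ) (hθ : |θ| ≤ Real.pi) : Real.cos θ ≤ 1 - θ^2 / 5 := by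
  have h := Real.cos_le_one_sub_mul_cos_sq hθ
  have hπ : Real.pi < 3.15 := Real.pi_lt_d2
  have hπ0 : 0 < Real.pi := Real.pi_pos
  have h2 : Real.pi ^ 2 < 10 := by nlinarith
  have hπ2 : (0:ℝ) < Real.pi ^ 2 := by positivity
  have h3 : θ^2 / 5 ≤ 2 / Real.pi ^ 2 * θ^2 := by
    rw [div_mul_eq_mul_div, le_div_iff₀ hπ2, div_mul_eq_mul_div, div_le_iff₀ (by norm_num : (0:ℝ) < 5)]
    nlinarith [sq_nonneg θ]
  linarith

/-- For `s ∈ (0,1)` there is `C > 0` (depending only on `s`) such that for every `k ≥ 4`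
and every `w ∈ 𝔻_s \ V_{s,k}`, `|w| ≤ (1 + C·k^{-1/2})^{-1/2}`. Here
`𝔻_s = {w : |w - (1-s)| ≤ s}` and `V_{s,k}` is the set of `w = (1-s) + r·e^{iθ}` with
`s - k^{-1/2} ≤ r ≤ s`, `|θ| ≤ k^{-1/4}`. -/
theorem stmt5 (s : ℝ) (hs : s ∈ Set.Ioo (0 : ℝ) 1) :
    ∃ C : ℝ, 0 < C ∧ ∀ k : ℕ, 4 ≤ k → ∀ w : ℂ,
      ‖w - (1 - (s : ℂ))‖ ≤ s →
      ¬ (∃ r θ : ℝ, s - (k : ℝ) ^ (-(1/2) : ℝ) ≤ r ∧ r ≤ s ∧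
        -((k : ℝ) ^ (-(1/4) : ℝ)) ≤ θ ∧ θ ≤ (k : ℝ) ^ (-(1/4) : ℝ) ∧
        w = ((1 - s : ℝ) : ℂ) + (r : ℂ) * Complex.exp ((θ : ℂ) * Complex.I)) →
      ‖w‖ ≤ (1 + C * (k : ℝ) ^ (-(1/2) : ℝ)) ^ (-(1/2) : ℝ) := by
  obtain ⟨hs0, hs1⟩ := hs
  have hC : (0:ℝ) < s * (1 - s) / 5 := by nlinarith
  refine ⟨s * (1 - s) / 5, hC, ?_⟩
  intro k hk w hw h
  set C : ℝ := s * (1 - s) / 5 with hCdef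
  set ε : ℝ := (k : ℝ) ^ (-(1/2) : ℝ) with hεdef
  set δ : ℝ := (k : ℝ) ^ (-(1/4) : ℝ) with hδdef
  have hk4 : (4:ℝ) ≤ (k:ℝ) := by exact_mod_cast hk
  have hk0 : (0:ℝ) < (k:ℝ) := by linarith
  have hε0 : 0 < ε := Real.rpow_pos_of_pos hk0 _
  have hδ0 : 0 < δ := Real.rpow_pos_of_pos hk0 _
  have hδ2 : δ ^ 2 = ε := by
    rw [hδdef, hεdef, ← Real.rpow_natCast ((k:ℝ) ^ (-(1/4) : ℝ)) 2, ← Real.rpow_mul hk0.le]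
    norm_num
  have hε2 : ε ^ 2 = (k:ℝ)⁻¹ := by
    rw [hεdef, ← Real.rpow_natCast ((k:ℝ) ^ (-(1/2) : ℝ)) 2, ← Real.rpow_mul hk0.le]
    norm_num [Real.rpow_neg_one]
  have hεh : ε ≤ 1/2 := by
    have h1 : (k:ℝ)⁻¹ ≤ 1/4 := by
      rw [inv_le_comm₀ hk0 (by norm_num)]; linarith
    nlinarith
  -- setup r, θ
  set z : ℂ := w - (1 - (s:ℂ)) with hzdef
  set r : ℝ := ‖z‖ with hrdef
  set θ : ℝ := Complex.arg z with hθdef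
  have hr0 : 0 ≤ r := norm_nonneg z
  have hrs : r ≤ s := hw
  have hθπ : |θ| ≤ Real.pi := Complex.abs_arg_le_pi z
  have hw_eq : w = ((1 - s : ℝ) : ℂ) + (r : ℂ) * Complex.exp ((θ : ℂ) * Complex.I) := by
    rw [hrdef, hθdef, Complex.norm_mul_exp_arg_mul_I, hzdef]
    push_cast; ring
  have habs : ‖w‖ ≤ (1 - s) + r := by
    calc ‖w‖ = ‖((1 - s : ℝ) : ℂ) + z‖ := by
          congr 1; rw [hzdef]; push_cast; ring
      _ ≤ ‖((1 - s : ℝ) : ℂ)‖ + ‖z‖ := norm_add_le _ _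
      _ = (1 - s) + r := by rw [Complex.norm_real, Real.norm_eq_abs, abs_of_nonneg (by linarith), hrdef]
  have hwnn : 0 ≤ ‖w‖ := norm_nonneg w
  have hre : z.re = r * Real.cos θ := by
    rcases eq_or_ne z 0 with h0 | h0
    · rw [hrdef, hθdef, h0]; simp
    · rw [hθdef, Complex.cos_arg h0, ← hrdef]
      have : r ≠ 0 := by rw [hrdef]; exact norm_ne_zero_iff.mpr h0
      field_simp
  have him : z.im = r * Real.sin θ := by
    rcases eq_or_ne z 0 with h0 | h0
    · rw [hrdef, hθdef, h0]; simp
    · rw [hθdef, Complex.sin_arg, ← hrdef]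
      have : r ≠ 0 := by rw [hrdef]; exact norm_ne_zero_iff.mpr h0
      field_simp
  have hr2 : z.re ^ 2 + z.im ^ 2 = r ^ 2 := by
    rw [hrdef, Complex.sq_norm, Complex.normSq_apply]; ring
  have hwz : w = ((1 - s : ℝ) : ℂ) + z := by rw [hzdef]; push_cast; ring
  have hident : (‖w‖) ^ 2 = (1-s)^2 + r^2 + 2*(1-s)*r*Real.cos θ := by
    rw [Complex.sq_norm, Complex.normSq_apply, hwz]
    simp only [Complex.add_re, Complex.add_im, Complex.ofReal_re, Complex.ofReal_im]
    rw [hre] at hr2 ⊢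
    nlinarith [hr2]
  have hcos : Real.cos θ ≤ 1 - θ^2/5 := cos_upper5 θ hθπ
  push_neg at h
  have hC1 : C ≤ 1 := by rw [hCdef]; nlinarith
  set T : ℝ := 1 + C * ε with hTdef
  have hT1 : 1 ≤ T := by rw [hTdef]; nlinarith
  have hT0 : (0:ℝ) < T := by linarith
  clear_value C ε δ z r θ T
  clear hzdef hrdef hθdef hεdef hδdef hε2 hwz hre him hr2 hw
  suffices hsq : (‖w‖) ^ 2 * T ≤ 1 by
    have hst : 0 < Real.sqrt T := Real.sqrt_pos.mpr hT0
    have hsqT : (Real.sqrt T) ^ 2 = T := Real.sq_sqrt hT0.le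
    have h1 : ‖w‖ * Real.sqrt T ≤ 1 := by
      nlinarith [sq_nonneg (‖w‖ * Real.sqrt T - 1), mul_nonneg hwnn hst.le]
    calc ‖w‖ ≤ 1 / Real.sqrt T := (le_div_iff₀ hst).mpr h1
      _ = T ^ (-(1/2) : ℝ) := by
          rw [Real.rpow_neg hT0.le, Real.sqrt_eq_rpow, one_div]
  rcases le_or_gt r (s - ε) with hA | hA
  · -- far inside: |w| ≤ 1 - ε
    have h1 : ‖w‖ ≤ 1 - ε := by linarith
    have h3 : (‖w‖)^2 ≤ (1 - ε)^2 := by nlinarith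
    have h4 : (1 - ε)^2 * T ≤ 1 := by
      rw [hTdef]
      nlinarith [mul_pos hC hε0, mul_nonneg (mul_nonneg hC.le hε0.le) hε0.le,
        mul_nonneg (mul_nonneg (mul_nonneg hC.le hε0.le) hε0.le) hε0.le]
    have h5 := mul_le_mul_of_nonneg_right h3 hT0.le
    linarith
  rcases le_or_gt r (s/2) with hB | hB
  · -- small r: |w| ≤ 1 - s/2
    have h1 : ‖w‖ ≤ 1 - s/2 := by linarith
    have h3 : (‖w‖)^2 ≤ (1 - s/2)^2 := by nlinarith
    have hq : s * (1 - s) / 5 * ε ≤ s * (1 - s) / 10 := by nlinarith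
    have h4 : (1 - s/2)^2 * T ≤ 1 := by
      rw [hTdef, hCdef]
      have h5 : (1 - s/2)^2 * (1 + s * (1 - s) / 5 * ε) ≤ (1 - s/2)^2 * (1 + s * (1 - s) / 10) :=
        mul_le_mul_of_nonneg_left (by linarith) (sq_nonneg _)
      have h6 : (1 - s/2)^2 * (1 + s * (1 - s) / 10) ≤ 1 := by nlinarith
      linarith
    have h5 := mul_le_mul_of_nonneg_right h3 hT0.le
    linarith
  · -- angle case
    have hθδ : δ < |θ| := by
      by_contra hc
      push_neg at hc
      rw [abs_le] at hc
      exact h r θ (le_of_lt hA) hrs hc.1 hc.2 hw_eq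
    have hθ2 : ε ≤ θ^2 := by
      rw [← hδ2, ← sq_abs θ]
      nlinarith [abs_nonneg θ]
    have hcos2 : Real.cos θ ≤ 1 - ε/5 := by linarith
    have h2r : (0:ℝ) ≤ 2*(1-s)*r := mul_nonneg (by linarith) hr0
    have key : (‖w‖)^2 ≤ 1 - C * ε := by
      rw [hident, hCdef]
      have e1 : (2*(1-s)*r) * Real.cos θ ≤ (2*(1-s)*r) * (1 - ε/5) :=
        mul_le_mul_of_nonneg_left hcos2 h2r
      have e3 : ((1-s)+r)^2 ≤ 1 := pow_le_one₀ (by linarith) (by linarith)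
      have e2 : (1-s)*(s/2) ≤ (1-s)*r :=
        mul_le_mul_of_nonneg_left hB.le (by linarith)
      have e4 : (1-s)*(s/2)*ε ≤ (1-s)*r*ε := mul_le_mul_of_nonneg_right e2 hε0.le
      linarith [e1, e3, e4]

    have h5 : (1 - C*ε) * T ≤ 1 := by rw [hTdef]; nlinarith [sq_nonneg (C*ε)]
    have h6 := mul_le_mul_of_nonneg_right key hT0.le
    linarith
end

section
/- Fix a real number q > 1 and δ ∈ (0, 1/2]. Then γ(iδ) is the real number 1 − (q^{1/2−δ} + q^{1/2+δ})/(q+1), which is ≥ 0 (and = 0 exactly when δ = 1/2). For every z ∈ ℂ with |Im z| ≤ δ one has |γ(z)| ≥ γ(iδ), and for every real α with −τ/2 < α ≤ τ/2 and α ≠ 0 one has the strict inequality |γ(α + iδ)| > γ(iδ). -/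
/-- `q^w = exp(w log q)`. -/
noncomputable def qpow (q : ℝ) (w : ℂ) : ℂ := Complex.exp (w * (Real.log q : ℂ))

/-- The symbol of the Laplacian: `γ(z) = 1 - (q^{1/2+iz} + q^{1/2-iz})/(q+1)`. -/
noncomputable def gam (q : ℝ) (z : ℂ) : ℂ :=
  1 - (qpow q (1/2 + Complex.I * z) + qpow q (1/2 - Complex.I * z)) / ((q : ℂ) + 1)

/-- `τ = 2π / log q`. -/
noncomputable def tauq (q : ℝ) : ℝ := 2 * Real.pi / Real.log q

set_option linter.unnecessarySeqFocus false

lemma gam_eq (q : ℝ) (hq : 0 < q) (z : ℂ) :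
    gam q z = 1 - (((q ^ ((1:ℝ)/2 - z.im) : ℝ) : ℂ) * Complex.exp (Complex.I * z.re * Real.log q)
      + ((q ^ ((1:ℝ)/2 + z.im) : ℝ) : ℂ) * Complex.exp (-(Complex.I * z.re * Real.log q))) / ((q:ℂ) + 1) := by
  have hre : ∀ r : ℝ, ((q ^ r : ℝ) : ℂ) = Complex.exp (r * Real.log q) := by
    intro r
    rw [Real.rpow_def_of_pos hq, mul_comm, Complex.ofReal_exp, Complex.ofReal_mul]
  unfold gam qpow
  rw [hre, hre, ← Complex.exp_add, ← Complex.exp_add]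
  have hz : z = (z.re : ℂ) + z.im * Complex.I := (Complex.re_add_im z).symm
  congr 2 <;> (rw [hz]; push_cast; ring_nf; simp [Complex.I_sq]; ring)

lemma gam_eq' (q : ℝ) (hq : 0 < q) (z : ℂ) :
    gam q z = ((1 - (q ^ ((1:ℝ)/2 - z.im) + q ^ ((1:ℝ)/2 + z.im)) *
        Real.cos (z.re * Real.log q) / (q + 1) : ℝ) : ℂ)
      + ((q ^ ((1:ℝ)/2 + z.im) - q ^ ((1:ℝ)/2 - z.im)) * Real.sin (z.re * Real.log q) / (q + 1) : ℝ)
        * Complex.I := by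
  have hq1 : (q : ℝ) + 1 ≠ 0 := by positivity
  have hq1' : ((q : ℂ) + 1) ≠ 0 := by
    intro h; apply hq1; exact_mod_cast congrArg Complex.re h
  rw [gam_eq q hq z]
  rw [show Complex.I * (z.re : ℂ) * (Real.log q : ℂ) = ((z.re * Real.log q : ℝ) : ℂ) * Complex.I by
    push_cast; ring]
  rw [show -(((z.re * Real.log q : ℝ) : ℂ) * Complex.I) = ((-(z.re * Real.log q) : ℝ) : ℂ) * Complex.I by push_cast; ring]
  rw [Complex.exp_mul_I, Complex.exp_mul_I]
  rw [← Complex.ofReal_cos, ← Complex.ofReal_sin, ← Complex.ofReal_cos, ← Complex.ofReal_sin,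
    Real.cos_neg, Real.sin_neg]
  push_cast
  field_simp
  ring

lemma gam_re' (q : ℝ) (hq : 0 < q) (z : ℂ) :
    (gam q z).re = 1 - (q ^ ((1:ℝ)/2 - z.im) + q ^ ((1:ℝ)/2 + z.im)) *
      Real.cos (z.re * Real.log q) / (q + 1) := by
  rw [gam_eq' q hq z]
  simp only [Complex.add_re, Complex.ofReal_re, Complex.mul_re, Complex.I_re, Complex.I_im,
    Complex.ofReal_im]
  ring

lemma sum_mono (q : ℝ) (hq : 1 < q) {a b : ℝ} (ha : 0 ≤ a) (hab : a ≤ b) :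
    q ^ ((1:ℝ)/2 - a) + q ^ ((1:ℝ)/2 + a) ≤ q ^ ((1:ℝ)/2 - b) + q ^ ((1:ℝ)/2 + b) := by
  have hq0 : 0 < q := lt_trans one_pos hq
  have h1 : q ^ ((1:ℝ)/2 - a) = q ^ ((1:ℝ)/2) * (q ^ (-(a+b)) * q ^ b) := by
    rw [← Real.rpow_add hq0, ← Real.rpow_add hq0]; ring_nf
  have h2 : q ^ ((1:ℝ)/2 - b) = q ^ ((1:ℝ)/2) * (q ^ (-(a+b)) * q ^ a) := by
    rw [← Real.rpow_add hq0, ← Real.rpow_add hq0]; ring_nf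
  have h3 : q ^ ((1:ℝ)/2 + a) = q ^ ((1:ℝ)/2) * q ^ a := by rw [← Real.rpow_add hq0]
  have h4 : q ^ ((1:ℝ)/2 + b) = q ^ ((1:ℝ)/2) * q ^ b := by rw [← Real.rpow_add hq0]
  have hs : (0:ℝ) < q ^ ((1:ℝ)/2) := Real.rpow_pos_of_pos hq0 _
  have huv : q ^ a ≤ q ^ b := Real.rpow_le_rpow_left_iff hq |>.mpr hab
  have hw : q ^ (-(a+b)) ≤ 1 :=
    Real.rpow_le_one_of_one_le_of_nonpos (le_of_lt hq) (by linarith)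
  rw [h1, h2, h3, h4]
  nlinarith [mul_nonneg (sub_nonneg.mpr huv) (sub_nonneg.mpr hw)]

lemma sum_strict_mono (q : ℝ) (hq : 1 < q) {a b : ℝ} (ha : 0 < a) (hab : a < b) :
    q ^ ((1:ℝ)/2 - a) + q ^ ((1:ℝ)/2 + a) < q ^ ((1:ℝ)/2 - b) + q ^ ((1:ℝ)/2 + b) := by
  have hq0 : 0 < q := lt_trans one_pos hq
  have h1 : q ^ ((1:ℝ)/2 - a) = q ^ ((1:ℝ)/2) * (q ^ (-(a+b)) * q ^ b) := by
    rw [← Real.rpow_add hq0, ← Real.rpow_add hq0]; ring_nf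
  have h2 : q ^ ((1:ℝ)/2 - b) = q ^ ((1:ℝ)/2) * (q ^ (-(a+b)) * q ^ a) := by
    rw [← Real.rpow_add hq0, ← Real.rpow_add hq0]; ring_nf
  have h3 : q ^ ((1:ℝ)/2 + a) = q ^ ((1:ℝ)/2) * q ^ a := by rw [← Real.rpow_add hq0]
  have h4 : q ^ ((1:ℝ)/2 + b) = q ^ ((1:ℝ)/2) * q ^ b := by rw [← Real.rpow_add hq0]
  have hs : (0:ℝ) < q ^ ((1:ℝ)/2) := Real.rpow_pos_of_pos hq0 _
  have huv : q ^ a < q ^ b := Real.rpow_lt_rpow_left_iff hq |>.mpr hab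
  have hw : q ^ (-(a+b)) < 1 :=
    Real.rpow_lt_one_of_one_lt_of_neg hq (by linarith)
  rw [h1, h2, h3, h4]
  nlinarith [mul_pos (sub_pos.mpr huv) (sub_pos.mpr hw)]

/-- For `δ ∈ (0,1/2]`, `γ(iδ)` equals the real number `1 - (q^{1/2-δ}+q^{1/2+δ})/(q+1)`,
which is nonnegative, vanishing exactly when `δ = 1/2`; moreover `|γ(z)| ≥ γ(iδ)` on the
strip `|Im z| ≤ δ`, with strict inequality `|γ(α+iδ)| > γ(iδ)` for real
`α ∈ (-τ/2, τ/2]`, `α ≠ 0`. -/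
theorem stmt7 (q : ℝ) (hq : 1 < q) (δ : ℝ) (hδ : δ ∈ Set.Ioc (0 : ℝ) (1/2)) :
    gam q (Complex.I * (δ : ℂ)) =
      ((1 - (q ^ ((1:ℝ)/2 - δ) + q ^ ((1:ℝ)/2 + δ)) / (q + 1) : ℝ) : ℂ) ∧
    0 ≤ 1 - (q ^ ((1:ℝ)/2 - δ) + q ^ ((1:ℝ)/2 + δ)) / (q + 1) ∧
    (1 - (q ^ ((1:ℝ)/2 - δ) + q ^ ((1:ℝ)/2 + δ)) / (q + 1) = 0 ↔ δ = 1/2) ∧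
    (∀ z : ℂ, |z.im| ≤ δ →
      1 - (q ^ ((1:ℝ)/2 - δ) + q ^ ((1:ℝ)/2 + δ)) / (q + 1) ≤ ‖gam q z‖) ∧
    ∀ α : ℝ, -(tauq q) / 2 < α → α ≤ tauq q / 2 → α ≠ 0 →
      1 - (q ^ ((1:ℝ)/2 - δ) + q ^ ((1:ℝ)/2 + δ)) / (q + 1) <
        ‖gam q ((α : ℂ) + Complex.I * (δ : ℂ))‖ := by
  obtain ⟨hδ0, hδ2⟩ := hδ
  have hq0 : 0 < q := lt_trans one_pos hq
  have hq1 : (0:ℝ) < q + 1 := by linarith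
  have hlog : 0 < Real.log q := Real.log_pos hq
  set A : ℝ := q ^ ((1:ℝ)/2 - δ) + q ^ ((1:ℝ)/2 + δ) with hA
  have hApos : 0 < A := by positivity
  have hhalf : q ^ ((1:ℝ)/2 - (1:ℝ)/2) + q ^ ((1:ℝ)/2 + (1:ℝ)/2) = 1 + q := by
    norm_num
  have hAle : A ≤ 1 + q := by
    rw [hA, ← hhalf]; exact sum_mono q hq (le_of_lt hδ0) hδ2
  -- part 1
  have him : (Complex.I * (δ : ℂ)).im = δ := by simp
  have hre : (Complex.I * (δ : ℂ)).re = 0 := by simp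
  have p1 : gam q (Complex.I * (δ : ℂ)) = ((1 - A / (q + 1) : ℝ) : ℂ) := by
    rw [gam_eq' q hq0, him, hre]
    norm_num
    rw [hA]; push_cast; ring
  -- part 2
  have p2 : 0 ≤ 1 - A / (q + 1) := by
    rw [sub_nonneg, div_le_one hq1]; linarith
  -- part 3
  have p3 : (1 - A / (q + 1) = 0 ↔ δ = 1/2) := by
    constructor
    · intro h
      by_contra hne
      have hlt : δ < 1/2 := lt_of_le_of_ne hδ2 hne
      have hAlt : A < 1 + q := by
        rw [hA, ← hhalf]; exact sum_strict_mono q hq hδ0 hlt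
      have : 0 < 1 - A / (q + 1) := by
        rw [sub_pos, div_lt_one hq1]; linarith
      linarith
    · intro h
      rw [hA, h, hhalf]
      field_simp
      ring
  -- part 4
  have key : ∀ z : ℂ, |z.im| ≤ δ →
      1 - A / (q + 1) ≤ (gam q z).re := by
    intro z hz
    rw [gam_re' q hq0]
    have hsym : q ^ ((1:ℝ)/2 - z.im) + q ^ ((1:ℝ)/2 + z.im)
        = q ^ ((1:ℝ)/2 - |z.im|) + q ^ ((1:ℝ)/2 + |z.im|) := by
      rcases abs_cases z.im with ⟨h, _⟩ | ⟨h, _⟩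
      · rw [h]
      · rw [h]; ring_nf
    have hB : q ^ ((1:ℝ)/2 - z.im) + q ^ ((1:ℝ)/2 + z.im) ≤ A := by
      rw [hsym, hA]; exact sum_mono q hq (abs_nonneg _) hz
    have hBpos : 0 < q ^ ((1:ℝ)/2 - z.im) + q ^ ((1:ℝ)/2 + z.im) := by positivity
    have hcos : Real.cos (z.re * Real.log q) ≤ 1 := Real.cos_le_one _
    have hprod : (q ^ ((1:ℝ)/2 - z.im) + q ^ ((1:ℝ)/2 + z.im)) * Real.cos (z.re * Real.log q)
        ≤ A := by
      calc (q ^ ((1:ℝ)/2 - z.im) + q ^ ((1:ℝ)/2 + z.im)) * Real.cos (z.re * Real.log q)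
          ≤ (q ^ ((1:ℝ)/2 - z.im) + q ^ ((1:ℝ)/2 + z.im)) * 1 :=
            mul_le_mul_of_nonneg_left hcos (le_of_lt hBpos)
        _ ≤ A := by rw [mul_one]; exact hB
    have := (div_le_div_iff_of_pos_right hq1).mpr hprod
    linarith
  have p4 : ∀ z : ℂ, |z.im| ≤ δ →
      1 - A / (q + 1) ≤ ‖gam q z‖ := fun z hz =>
    le_trans (key z hz) (Complex.re_le_norm _)
  refine ⟨p1, p2, p3, p4, ?_⟩
  -- part 5
  intro α h1 h2 h3
  set z : ℂ := (α : ℂ) + Complex.I * (δ : ℂ) with hzdef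
  have hzre : z.re = α := by simp [hzdef]
  have hzim : z.im = δ := by simp [hzdef]
  have hτ : tauq q / 2 = Real.pi / Real.log q := by rw [tauq]; ring
  have hub : α * Real.log q ≤ Real.pi := by
    rw [hτ] at h2
    exact (le_div_iff₀ hlog).mp h2
  have hlb : -Real.pi < α * Real.log q := by
    rw [show -(tauq q)/2 = -(tauq q/2) by ring, hτ, ← neg_div] at h1
    exact (div_lt_iff₀ hlog).mp h1
  have hθne : α * Real.log q ≠ 0 := mul_ne_zero h3 (ne_of_gt hlog)
  have hpi : 0 < Real.pi := Real.pi_pos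
  have hcosne : Real.cos (α * Real.log q) ≠ 1 := by
    intro h
    exact hθne ((Real.cos_eq_one_iff_of_lt_of_lt (by linarith) (by linarith)).mp h)
  have hcoslt : Real.cos (α * Real.log q) < 1 :=
    lt_of_le_of_ne (Real.cos_le_one _) hcosne
  have hrelt : 1 - A / (q + 1) < (gam q z).re := by
    rw [gam_re' q hq0, hzre, hzim, ← hA]
    have hlt : A * Real.cos (α * Real.log q) < A := by nlinarith
    have := (div_lt_div_iff_of_pos_right hq1).mpr hlt
    linarith
  exact lt_of_lt_of_le hrelt (Complex.re_le_norm _)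
end

section
/- Fix a real number q > 1 and δ ∈ (0, 1/2]. Then γ(τ/2 + iδ) is the real number 1 + (q^{1/2−δ} + q^{1/2+δ})/(q+1). For every z ∈ ℂ with |Im z| ≤ δ one has |γ(z)| ≤ γ(τ/2 + iδ), and for every real α with −τ/2 < α < τ/2 one has the strict inequality |γ(α + iδ)| < γ(τ/2 + iδ). -/
lemma qpow_eval (q : ℝ) (hq : 0 < q) (r t : ℝ) :
    qpow q ((r : ℂ) + Complex.I * t) =
      ((q ^ r : ℝ) : ℂ) * Complex.exp (Complex.I * ((t * Real.log q : ℝ) : ℂ)) := by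
  rw [qpow, Real.rpow_def_of_pos hq]
  push_cast
  rw [← Complex.exp_add]
  congr 1
  ring

lemma gam_eval (q : ℝ) (hq : 0 < q) (x y : ℝ) :
    gam q ((x : ℂ) + Complex.I * y) =
      ((1 - (q ^ ((1:ℝ)/2 - y) + q ^ ((1:ℝ)/2 + y)) * Real.cos (x * Real.log q) / (q + 1) : ℝ) : ℂ)
      + ((-(q ^ ((1:ℝ)/2 - y) - q ^ ((1:ℝ)/2 + y)) * Real.sin (x * Real.log q) / (q + 1) : ℝ) : ℂ) * Complex.I := by
  have h1 : (1/2 : ℂ) + Complex.I * ((x : ℂ) + Complex.I * y)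
      = ((1/2 - y : ℝ) : ℂ) + Complex.I * (x : ℝ) := by
    push_cast; ring_nf; rw [Complex.I_sq]; ring
  have h2 : (1/2 : ℂ) - Complex.I * ((x : ℂ) + Complex.I * y)
      = ((1/2 + y : ℝ) : ℂ) + Complex.I * ((-x : ℝ) : ℂ) := by
    push_cast; ring_nf; rw [Complex.I_sq]; ring
  rw [gam, h1, h2, qpow_eval q hq, qpow_eval q hq]
  have e1 : Complex.exp (Complex.I * ((x * Real.log q : ℝ) : ℂ))
      = ((Real.cos (x * Real.log q) : ℝ) : ℂ) + ((Real.sin (x * Real.log q) : ℝ) : ℂ) * Complex.I := by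
    rw [mul_comm, Complex.exp_mul_I]; push_cast; ring
  have e2 : Complex.exp (Complex.I * ((-x * Real.log q : ℝ) : ℂ))
      = ((Real.cos (x * Real.log q) : ℝ) : ℂ) - ((Real.sin (x * Real.log q) : ℝ) : ℂ) * Complex.I := by
    rw [mul_comm, Complex.exp_mul_I]
    push_cast
    rw [neg_mul, Complex.cos_neg, Complex.sin_neg]
    ring
  rw [e1, e2]
  have hq1 : (q : ℂ) + 1 ≠ 0 := by
    intro h
    have := congrArg Complex.re h
    simp at this
    linarith
  push_cast
  field_simp
  ring

lemma mono_sum (q : ℝ) (hq : 1 < q) (y δ : ℝ) (h : |y| ≤ δ) :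
    q ^ ((1:ℝ)/2 - y) + q ^ ((1:ℝ)/2 + y) ≤ q ^ ((1:ℝ)/2 - δ) + q ^ ((1:ℝ)/2 + δ) := by
  have hq0 : 0 < q := lt_trans one_pos hq
  have key : ∀ a b : ℝ, |a| ≤ b → q ^ (-a) + q ^ a ≤ q ^ (-b) + q ^ b := by
    intro a b hab
    have h1 : q ^ a + q ^ (-a) = q ^ |a| + q ^ (-|a|) := by
      rcases abs_cases a with ⟨h, _⟩ | ⟨h, _⟩ <;> rw [h] <;> ring_nf
    have hu : (1:ℝ) ≤ q ^ |a| := Real.one_le_rpow hq.le (abs_nonneg a)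
    have huv : q ^ |a| ≤ q ^ b := Real.rpow_le_rpow_of_exponent_le hq.le hab
    set u := q ^ |a| with hu_def
    set v := q ^ b with hv_def
    have hu0 : 0 < u := Real.rpow_pos_of_pos hq0 _
    have hv0 : 0 < v := Real.rpow_pos_of_pos hq0 _
    have hiu : q ^ (-|a|) = u⁻¹ := by rw [Real.rpow_neg hq0.le]
    have hiv : q ^ (-b) = v⁻¹ := by rw [Real.rpow_neg hq0.le]
    rw [add_comm (q ^ (-a)), h1, hiu, hiv, add_comm (v⁻¹)]
    have h2 : u * u⁻¹ = 1 := mul_inv_cancel₀ hu0.ne'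
    have h3 : v * v⁻¹ = 1 := mul_inv_cancel₀ hv0.ne'
    nlinarith [mul_pos hu0 hv0, mul_nonneg (sub_nonneg.mpr huv) (sub_nonneg.mpr (le_trans hu huv))]
  have e : ∀ c : ℝ, q ^ ((1:ℝ)/2 + c) = q ^ ((1:ℝ)/2) * q ^ c := fun c =>
    Real.rpow_add hq0 _ _
  have e' : ∀ c : ℝ, q ^ ((1:ℝ)/2 - c) = q ^ ((1:ℝ)/2) * q ^ (-c) := fun c => by
    rw [sub_eq_add_neg, Real.rpow_add hq0]
  rw [e, e', e, e']
  have := key y δ h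
  nlinarith [Real.rpow_pos_of_pos hq0 ((1:ℝ)/2)]

lemma abs_sq_ofReal (a b : ℝ) :
    ‖(a : ℂ) + (b : ℂ) * Complex.I‖ ^ 2 = a ^ 2 + b ^ 2 := by
  rw [Complex.sq_norm, Complex.normSq_apply]
  simp
  ring

lemma key_sq (a b c s : ℝ) (ha : 0 < a) (hb : 0 < b) (hc : -1 ≤ c)
    (hs : s ^ 2 = 1 - c ^ 2) :
    (1 - (a + b) * c) ^ 2 + ((a - b) * s) ^ 2 ≤ (1 + (a + b)) ^ 2 := by
  nlinarith [mul_nonneg (add_pos ha hb).le (by linarith : (0:ℝ) ≤ 1 + c),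
    mul_nonneg (mul_nonneg ha.le hb.le) (sq_nonneg s)]

lemma key_sq_strict (a b c s : ℝ) (ha : 0 < a) (hb : 0 < b) (hc : -1 < c)
    (hs : s ^ 2 = 1 - c ^ 2) :
    (1 - (a + b) * c) ^ 2 + ((a - b) * s) ^ 2 < (1 + (a + b)) ^ 2 := by
  nlinarith [mul_pos (add_pos ha hb) (by linarith : (0:ℝ) < 1 + c),
    mul_nonneg (mul_nonneg ha.le hb.le) (sq_nonneg s)]

/-- For `δ ∈ (0,1/2]`, `γ(τ/2 + iδ)` equals the real number
`1 + (q^{1/2-δ}+q^{1/2+δ})/(q+1)`; moreover `|γ(z)| ≤ γ(τ/2+iδ)` on the strip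
`|Im z| ≤ δ`, with strict inequality `|γ(α+iδ)| < γ(τ/2+iδ)` for real
`α ∈ (-τ/2, τ/2)`. -/
theorem stmt8 (q : ℝ) (hq : 1 < q) (δ : ℝ) (hδ : δ ∈ Set.Ioc (0 : ℝ) (1/2)) :
    gam q (((tauq q / 2 : ℝ) : ℂ) + Complex.I * (δ : ℂ)) =
      ((1 + (q ^ ((1:ℝ)/2 - δ) + q ^ ((1:ℝ)/2 + δ)) / (q + 1) : ℝ) : ℂ) ∧
    (∀ z : ℂ, |z.im| ≤ δ →
      ‖gam q z‖ ≤ 1 + (q ^ ((1:ℝ)/2 - δ) + q ^ ((1:ℝ)/2 + δ)) / (q + 1)) ∧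
    ∀ α : ℝ, -(tauq q) / 2 < α → α < tauq q / 2 →
      ‖gam q ((α : ℂ) + Complex.I * (δ : ℂ))‖ <
        1 + (q ^ ((1:ℝ)/2 - δ) + q ^ ((1:ℝ)/2 + δ)) / (q + 1) := by
  have hq0 : (0:ℝ) < q := lt_trans one_pos hq
  have hL : 0 < Real.log q := Real.log_pos hq
  have hQ : (0:ℝ) < q + 1 := by linarith
  set A' : ℝ := q ^ ((1:ℝ)/2 - δ) with hA'
  set B' : ℝ := q ^ ((1:ℝ)/2 + δ) with hB'
  have hA'0 : 0 < A' := Real.rpow_pos_of_pos hq0 _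
  have hB'0 : 0 < B' := Real.rpow_pos_of_pos hq0 _
  set M : ℝ := 1 + (A' + B') / (q + 1) with hM
  have hM0 : 0 < M := by positivity
  -- general square bound
  have habs_sq : ∀ x y : ℝ, ‖gam q ((x : ℂ) + Complex.I * y)‖^2 =
      (1 - (q ^ ((1:ℝ)/2 - y) + q ^ ((1:ℝ)/2 + y)) * Real.cos (x * Real.log q) / (q + 1)) ^ 2
      + (-(q ^ ((1:ℝ)/2 - y) - q ^ ((1:ℝ)/2 + y)) * Real.sin (x * Real.log q) / (q + 1)) ^ 2 := by
    intro x y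
    rw [gam_eval q hq0, abs_sq_ofReal]
  have hbound : ∀ x y : ℝ, |y| ≤ δ → ‖gam q ((x : ℂ) + Complex.I * y)‖^2 ≤ M^2 := by
    intro x y hy
    rw [habs_sq]
    set A : ℝ := q ^ ((1:ℝ)/2 - y)
    set B : ℝ := q ^ ((1:ℝ)/2 + y)
    have hA0 : 0 < A := Real.rpow_pos_of_pos hq0 _
    have hB0 : 0 < B := Real.rpow_pos_of_pos hq0 _
    set c := Real.cos (x * Real.log q)
    set s := Real.sin (x * Real.log q)
    have hc : -1 ≤ c := Real.neg_one_le_cos _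
    have hs : s ^ 2 = 1 - c ^ 2 := by
      have := Real.sin_sq_add_cos_sq (x * Real.log q); linarith
    have key := key_sq (A / (q+1)) (B / (q+1)) c s
      (div_pos hA0 hQ) (div_pos hB0 hQ) hc hs
    have hSS' : A + B ≤ A' + B' := mono_sum q hq y δ hy
    have e1 : (1 - (A + B) * c / (q + 1)) ^ 2 + (-(A - B) * s / (q + 1)) ^ 2
        = (1 - (A/(q+1) + B/(q+1)) * c) ^ 2 + ((A/(q+1) - B/(q+1)) * s) ^ 2 := by
      field_simp
    rw [e1]
    have e2 : (1 + (A/(q+1) + B/(q+1)))^2 ≤ M^2 := by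
      have h1 : A/(q+1) + B/(q+1) = (A+B)/(q+1) := by rw [← add_div]
      have h2 : (A+B)/(q+1) ≤ (A'+B')/(q+1) := by gcongr
      have h3 : 0 ≤ 1 + (A/(q+1) + B/(q+1)) := by positivity
      have h4 : 1 + (A/(q+1) + B/(q+1)) ≤ M := by rw [hM]; rw [h1] at *; linarith
      exact pow_le_pow_left₀ h3 h4 2
    linarith [key]
  have ht : (tauq q / 2) * Real.log q = Real.pi := by
    rw [tauq]; field_simp
  refine ⟨?_, ?_, ?_⟩
  · rw [gam_eval q hq0, ht, Real.cos_pi, Real.sin_pi]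
    have hbz : (-(q ^ ((1:ℝ)/2 - δ) - q ^ ((1:ℝ)/2 + δ)) * 0 / (q + 1) : ℝ) = 0 := by
      ring
    have haz : (1 - (q ^ ((1:ℝ)/2 - δ) + q ^ ((1:ℝ)/2 + δ)) * (-1) / (q + 1) : ℝ)
        = 1 + (q ^ ((1:ℝ)/2 - δ) + q ^ ((1:ℝ)/2 + δ)) / (q + 1) := by
      ring
    rw [hbz, haz, hM]
    push_cast
    ring
  · intro z hz
    have hz' : z = (z.re : ℂ) + Complex.I * (z.im : ℂ) := by
      rw [mul_comm]; exact (Complex.re_add_im z).symm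
    rw [hz']
    have h := hbound z.re z.im hz
    exact le_of_pow_le_pow_left₀ (by norm_num) hM0.le h
  · intro α hα1 hα2
    have ht1 : α * Real.log q < Real.pi := by
      have := mul_lt_mul_of_pos_right hα2 hL
      rwa [ht] at this
    have ht2 : -Real.pi < α * Real.log q := by
      have h' : -(tauq q / 2) < α := by linarith
      have := mul_lt_mul_of_pos_right h' hL
      rwa [neg_mul, ht] at this
    have htabs : |α * Real.log q| < Real.pi := abs_lt.mpr ⟨ht2, ht1⟩
    have hc : -1 < Real.cos (α * Real.log q) := by
      have := Real.cos_lt_cos_of_nonneg_of_le_pi (abs_nonneg (α * Real.log q))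
        le_rfl htabs
      rwa [Real.cos_pi, Real.cos_abs] at this
    have hsq := habs_sq α δ
    set c := Real.cos (α * Real.log q)
    set s := Real.sin (α * Real.log q)
    have hs : s ^ 2 = 1 - c ^ 2 := by
      have := Real.sin_sq_add_cos_sq (α * Real.log q); linarith
    have key := key_sq_strict (A' / (q+1)) (B' / (q+1)) c s
      (div_pos hA'0 hQ) (div_pos hB'0 hQ) hc hs
    have e1 : (1 - (A' + B') * c / (q + 1)) ^ 2 + (-(A' - B') * s / (q + 1)) ^ 2
        = (1 - (A'/(q+1) + B'/(q+1)) * c) ^ 2 + ((A'/(q+1) - B'/(q+1)) * s) ^ 2 := by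
      field_simp
    have e2 : (1 + (A'/(q+1) + B'/(q+1))) = M := by
      rw [hM, ← add_div]
    rw [e1] at hsq
    rw [e2] at key
    have hlt : (‖gam q ((α : ℂ) + Complex.I * (δ : ℂ))‖)^2 < M^2 := by
      rw [hsq]; exact key
    exact lt_of_pow_lt_pow_left₀ 2 hM0.le hlt
end

section
/- Fix an integer q ≥ 2, a real number p with 1 ≤ p < 2, its conjugate exponent p′ = p/(p−1) (with p′ = ∞ and 1/p′ = 0 when p = 1), and an integer m ≥ 2. Let X be a connected simple graph with no cycles in which every vertex has exactly q+1 neighbours, with graph distance d. Then there exists a constant C > 0, depending only on p, q and m, such that for all vertices o and x of X, the family (q^{(d(o,x) − d(o,y) − d(x,y))/p′} · q^{(1 − 2/p)·d(x,y)} · (1 + d(x,y))^{−m})_{y ∈ X} is summable and its sum is at most C. -/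
open SimpleGraph

section TreeHelpers

variable {X : Type*} {G : SimpleGraph X} {q : ℕ}

private lemma tree_med (hG : G.IsAcyclic) :
    ∀ (N : ℕ) {x o y : X} (P : G.Walk x o) (Q : G.Walk x y), P.length ≤ N →
    P.IsPath → Q.IsPath →
    ∃ (c : ℕ) (z : X) (P₂ : G.Walk z o) (Q₂ : G.Walk z y),
      P₂.length + c = P.length ∧ Q₂.length + c = Q.length ∧
      (P₂.reverse.append Q₂).IsPath ∧ P.getVert c = z := by
  classical
  intro N
  induction N with
  | zero =>
    intro x o y P Q hlen hP hQ
    cases P with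
    | nil =>
      exact ⟨0, x, Walk.nil, Q, by simp, by simp, by simpa using hQ, by simp⟩
    | cons h P' => simp at hlen
  | succ N ih =>
    intro x o y P Q hlen hP hQ
    cases P with
    | nil =>
      exact ⟨0, x, Walk.nil, Q, by simp, by simp, by simpa using hQ, by simp⟩
    | @cons _ u _ h P' =>
      cases Q with
      | nil =>
        refine ⟨0, x, Walk.cons h P', Walk.nil, by simp, by simp, ?_, by simp⟩
        rw [Walk.append_nil]
        exact hP.reverse
      | @cons _ v _ h' Q' =>
        by_cases huv : u = v
        · subst huv
          obtain ⟨c, z, P₂, Q₂, h1, h2, h3, h4⟩ := ih P' Q'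
            (by simpa using Nat.succ_le_succ_iff.mp (by simpa using hlen))
            (hP.of_cons) (hQ.of_cons)
          refine ⟨c + 1, z, P₂, Q₂, ?_, ?_, h3, ?_⟩
          · simp [← h1]; ring
          · simp [← h2]; ring
          · rw [Walk.getVert_cons_succ]; exact h4
        · refine ⟨0, x, Walk.cons h P', Walk.cons h' Q', by simp, by simp, ?_, by simp⟩
          rw [Walk.isPath_def, Walk.support_append, Walk.support_reverse]
          rw [List.nodup_append]
          refine ⟨by rw [List.nodup_reverse]; exact hP.support_nodup, ?_, ?_⟩
          · simpa using hQ.of_cons.support_nodup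
          · intro w hwP w' hwQ hww'
            subst hww'
            simp only [List.mem_reverse] at hwP
            have hwQ' : w ∈ Q'.support := by simpa using hwQ
            have hxQ' : x ∉ Q'.support := by
              have := hQ
              rw [Walk.cons_isPath_iff] at this
              exact this.2
            have hwx : w ≠ x := fun e => hxQ' (e ▸ hwQ')
            have hwP' : w ∈ P'.support := by
              rcases (Walk.mem_support_iff _).mp hwP with e | e
              · exact absurd e hwx
              · simpa using e
            have hxP' : x ∉ P'.support := ((Walk.cons_isPath_iff _ _).mp hP).2
            set A : G.Walk x w := Walk.cons h (P'.takeUntil w hwP')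
            set B : G.Walk x w := Walk.cons h' (Q'.takeUntil w hwQ')
            have hA : A.IsPath := by
              rw [Walk.cons_isPath_iff]
              exact ⟨(hP.of_cons).takeUntil hwP',
                fun hx => hxP' (Walk.support_takeUntil_subset _ hwP' hx)⟩
            have hB : B.IsPath := by
              rw [Walk.cons_isPath_iff]
              exact ⟨(hQ.of_cons).takeUntil hwQ',
                fun hx => hxQ' (Walk.support_takeUntil_subset _ hwQ' hx)⟩
            have hAB : A = B := by
              have := hG.path_unique (p := ⟨A, hA⟩) (q := ⟨B, hB⟩)
              exact congrArg Subtype.val this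
            have : A.getVert 1 = B.getVert 1 := by rw [hAB]
            simp only [A, B, Walk.getVert_cons_succ, Walk.getVert_zero] at this
            exact huv this

private lemma path_length_eq_dist (hconn : G.Connected) (hacyc : G.IsAcyclic)
    {u v : X} (R : G.Walk u v) (hR : R.IsPath) : R.length = G.dist u v := by
  obtain ⟨S, hS, hSlen⟩ := hconn.exists_path_of_dist u v
  have : (⟨R, hR⟩ : G.Path u v) = ⟨S, hS⟩ := hacyc.path_unique _ _
  rw [show R = S from congrArg Subtype.val this, hSlen]

private lemma exists_adj_dist (hconn : G.Connected) {z y : X} {j : ℕ}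
    (h : G.dist z y = j + 1) : ∃ w, G.Adj y w ∧ G.dist z w = j := by
  obtain ⟨W, hWlen⟩ := hconn.exists_walk_length_eq_dist z y
  have hnn : ¬ W.reverse.Nil := by
    rw [SimpleGraph.Walk.not_nil_iff_lt_length, Walk.length_reverse, hWlen, h]
    omega
  refine ⟨W.reverse.getVert 1, Walk.adj_snd hnn, ?_⟩
  have h1 : G.dist z (W.reverse.getVert 1) ≤ j := by
    have := SimpleGraph.dist_le (W.reverse.tail.reverse)
    rwa [Walk.length_reverse, show W.reverse.tail.length = j by
      have := Walk.length_tail_add_one hnn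
      rw [Walk.length_reverse, hWlen, h] at this
      omega] at this
  have h2 : j ≤ G.dist z (W.reverse.getVert 1) := by
    have htri := hconn.dist_triangle (u := z) (v := W.reverse.getVert 1) (w := y)
    have hadj : G.dist (W.reverse.getVert 1) y ≤ 1 := by
      rw [SimpleGraph.dist_comm]
      exact le_of_eq (dist_eq_one_iff_adj.mpr (Walk.adj_snd hnn))
    omega
  omega

private lemma med_dist (hconn : G.Connected) (hacyc : G.IsAcyclic)
    {o x : X} (P : G.Walk x o) (hP : P.IsPath) (y : X) :
    ∃ c : ℕ, c ≤ G.dist x y ∧ G.dist o y + 2*c = G.dist x o + G.dist x y ∧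
      G.dist (P.getVert c) y + c ≤ G.dist x y := by
  obtain ⟨Q, hQ, hQlen⟩ := hconn.exists_path_of_dist x y
  obtain ⟨c, z, P₂, Q₂, h1, h2, h3, h4⟩ := tree_med hacyc P.length P Q le_rfl hP hQ
  have hPlen : P.length = G.dist x o := path_length_eq_dist hconn hacyc P hP
  have hR : (P₂.reverse.append Q₂).length = G.dist o y :=
    path_length_eq_dist hconn hacyc _ h3
  rw [Walk.length_append, Walk.length_reverse] at hR
  have hd : G.dist z y ≤ Q₂.length := SimpleGraph.dist_le Q₂
  refine ⟨c, by omega, by omega, ?_⟩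
  rw [h4]
  omega

private lemma nbr_finite (hdeg : ∀ v : X, (G.neighborSet v).ncard = q + 1) (v : X) :
    (G.neighborSet v).Finite := by
  by_contra h
  have := Set.Infinite.ncard h
  rw [hdeg v] at this
  omega

private lemma sphere_bound (hconn : G.Connected) (hq : 1 ≤ q)
    (hdeg : ∀ v : X, (G.neighborSet v).ncard = q + 1) (z : X) (j : ℕ) :
    ∃ F : Finset X, (∀ y, y ∈ F ↔ G.dist z y = j) ∧ F.card ≤ (q+1) * q^j := by
  classical
  induction j with
  | zero =>
    refine ⟨{z}, fun y => ?_, by simpa using Nat.one_le_iff_ne_zero.mp (by positivity)⟩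
    simp only [Finset.mem_singleton]
    constructor
    · rintro rfl; exact SimpleGraph.dist_self
    · intro h
      by_contra hne
      exact (SimpleGraph.dist_ne_zero_iff_ne_and_reachable.mpr
        ⟨fun e => hne e.symm, hconn z y⟩) h
  | succ j ih =>
    obtain ⟨F, hF, hFcard⟩ := ih
    set T : X → Finset X := fun w =>
      ((nbr_finite hdeg w).toFinset).filter (fun y => G.dist z y = j + 1) with hT
    have hTmem : ∀ w y, y ∈ T w ↔ (G.Adj w y ∧ G.dist z y = j + 1) := by
      intro w y
      simp [hT, Set.Finite.mem_toFinset]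
    refine ⟨F.biUnion T, fun y => ?_, ?_⟩
    · constructor
      · intro hy
        obtain ⟨w, hw, hyw⟩ := Finset.mem_biUnion.mp hy
        exact ((hTmem w y).mp hyw).2
      · intro hy
        obtain ⟨w, hadj, hdw⟩ := exists_adj_dist hconn hy
        exact Finset.mem_biUnion.mpr ⟨w, (hF w).mpr hdw, (hTmem w y).mpr ⟨hadj.symm, hy⟩⟩
    · have hcard : (F.biUnion T).card ≤ ∑ w ∈ F, (T w).card := Finset.card_biUnion_le
      rcases Nat.eq_zero_or_pos j with rfl | hj
      · have hFsub : F ⊆ {z} := by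
          intro w hw
          have := (hF w).mp hw
          simp only [Finset.mem_singleton]
          by_contra hne
          exact (SimpleGraph.dist_ne_zero_iff_ne_and_reachable.mpr
            ⟨fun e => hne e.symm, hconn z w⟩) this
        have hTcard : ∀ w, (T w).card ≤ q + 1 := by
          intro w
          have h1 : T w ⊆ (nbr_finite hdeg w).toFinset := Finset.filter_subset _ _
          have := Finset.card_le_card h1
          rwa [← Set.ncard_eq_toFinset_card _ (nbr_finite hdeg w), hdeg w] at this
        calc (F.biUnion T).card ≤ ∑ w ∈ F, (T w).card := hcard
          _ ≤ ∑ _w ∈ F, (q+1) := Finset.sum_le_sum (fun w _ => hTcard w)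
          _ = F.card * (q+1) := by rw [Finset.sum_const, smul_eq_mul]
          _ ≤ 1 * (q+1) := by
              exact Nat.mul_le_mul_right _ (le_trans (Finset.card_le_card hFsub) (by simp))
          _ ≤ (q+1) * q^1 := by nlinarith
      · have hTcard : ∀ w ∈ F, (T w).card ≤ q := by
          intro w hw
          have hdw : G.dist z w = (j - 1) + 1 := by
            rw [(hF w).mp hw]; omega
          obtain ⟨u, huadj, hu⟩ := exists_adj_dist hconn hdw
          have husub : T w ⊆ ((nbr_finite hdeg w).toFinset).erase u := by
            intro y hy
            rw [hTmem] at hy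
            refine Finset.mem_erase.mpr ⟨?_, ?_⟩
            · rintro rfl
              rw [hu] at hy
              omega
            · simp [Set.Finite.mem_toFinset]
              exact hy.1
          have := Finset.card_le_card husub
          rw [Finset.card_erase_of_mem (by simp [Set.Finite.mem_toFinset]; exact huadj),
            ← Set.ncard_eq_toFinset_card _ (nbr_finite hdeg w), hdeg w] at this
          omega
        calc (F.biUnion T).card ≤ ∑ w ∈ F, (T w).card := hcard
          _ ≤ ∑ _w ∈ F, q := Finset.sum_le_sum hTcard
          _ = F.card * q := by rw [Finset.sum_const, smul_eq_mul]
          _ ≤ ((q+1) * q^j) * q := Nat.mul_le_mul_right _ hFcard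
          _ = (q+1) * q^(j+1) := by ring

private lemma geo_sum_le (hq : 2 ≤ q) (k : ℕ) :
    ∑ j ∈ Finset.range (k+1), q^j ≤ 2 * q^k := by
  induction k with
  | zero => simp
  | succ k ih =>
    rw [Finset.sum_range_succ]
    have h1 : 2 * q^k ≤ q * q^k := Nat.mul_le_mul_right _ hq
    have : q * q^k = q^(k+1) := by ring
    omega

private lemma ball_bound (hconn : G.Connected) (hq : 2 ≤ q)
    (hdeg : ∀ v : X, (G.neighborSet v).ncard = q + 1) (z : X) (k : ℕ) :
    ∃ F : Finset X, (∀ y, G.dist z y ≤ k → y ∈ F) ∧ F.card ≤ 2 * ((q+1) * q^k) := by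
  classical
  choose SF hSF1 hSF2 using sphere_bound hconn (by omega) hdeg z
  refine ⟨(Finset.range (k+1)).biUnion SF, fun y hy => ?_, ?_⟩
  · exact Finset.mem_biUnion.mpr ⟨G.dist z y, Finset.mem_range.mpr (by omega),
      (hSF1 _ y).mpr rfl⟩
  · calc ((Finset.range (k+1)).biUnion SF).card ≤ ∑ j ∈ Finset.range (k+1), (SF j).card :=
        Finset.card_biUnion_le
      _ ≤ ∑ j ∈ Finset.range (k+1), (q+1) * q^j := Finset.sum_le_sum (fun j _ => hSF2 j)
      _ = (q+1) * ∑ j ∈ Finset.range (k+1), q^j := by rw [Finset.mul_sum]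
      _ ≤ (q+1) * (2 * q^k) := Nat.mul_le_mul_left _ (geo_sum_le hq k)
      _ = 2 * ((q+1) * q^k) := by ring

private lemma Hsummable {q : ℕ} (hq : 2 ≤ q) {p : ℝ} (hp1 : 1 ≤ p) (hp2 : p < 2) {m : ℕ}
    (hm : 2 ≤ m) :
    Summable (fun nk : ℕ × ℕ => if nk.2 ≤ nk.1 then
      (2*((q:ℝ)+1)) * ((q:ℝ)^(1-2/p))^(nk.1-nk.2) / (1+(nk.1:ℝ))^m else 0) := by
  have hq1 : (1:ℝ) < q := by exact_mod_cast by omega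
  set s : ℝ := (q:ℝ)^(1-2/p) with hs
  have hp0 : 0 < p := by linarith
  have hexp : 1 - 2/p < 0 := by
    have : 1 < 2/p := (one_lt_div hp0).mpr (by linarith)
    linarith
  have hs0 : 0 < s := Real.rpow_pos_of_pos (by linarith) _
  have hs1 : s < 1 := Real.rpow_lt_one_of_one_lt_of_neg hq1 hexp
  set H : ℕ × ℕ → ℝ := fun nk => if nk.2 ≤ nk.1 then
      (2*((q:ℝ)+1)) * s^(nk.1-nk.2) / (1+(nk.1:ℝ))^m else 0 with hH
  set e : ℕ × ℕ → ℕ × ℕ := fun jk => (jk.1 + jk.2, jk.2) with he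
  have hinj : Function.Injective e := by
    rintro ⟨j, k⟩ ⟨j', k'⟩ h
    simp only [he, Prod.mk.injEq] at h
    obtain ⟨h1, h2⟩ := h
    subst h2
    exact Prod.ext (by omega) rfl
  have hrange : ∀ x ∉ Set.range e, H x = 0 := by
    rintro ⟨n, k⟩ hx
    by_cases hkn : k ≤ n
    · exact absurd ⟨(n - k, k), Prod.ext (by show n - k + k = n; omega) rfl⟩ hx
    · simp [hH, hkn]
  rw [← Function.Injective.summable_iff hinj hrange]
  have hcomp : (H ∘ e) = fun jk : ℕ × ℕ =>
      (2*((q:ℝ)+1)) * s^jk.1 / (1+((jk.1+jk.2 : ℕ):ℝ))^m := by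
    funext ⟨j, k⟩
    simp [hH, he, Nat.le_add_left]
  rw [hcomp]
  have hgeom : Summable (fun j : ℕ => (2*((q:ℝ)+1)) * s^j) :=
    (summable_geometric_of_lt_one hs0.le hs1).mul_left _
  have hpow : Summable (fun k : ℕ => 1 / (1+(k:ℝ))^2) := by
    have := (summable_nat_add_iff (f := fun n : ℕ => 1 / (n:ℝ)^2) 1).mpr
      (Real.summable_one_div_nat_pow.mpr one_lt_two)
    refine this.congr fun k => ?_
    push_cast
    ring_nf
  have hprod := hgeom.mul_of_nonneg hpow
    (fun j => by positivity) (fun k => by positivity)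
  refine Summable.of_nonneg_of_le (fun jk => by positivity) ?_ hprod
  rintro ⟨j, k⟩
  simp only
  have hb : (1+((k:ℕ):ℝ))^2 ≤ (1+((j+k : ℕ):ℝ))^m := by
    push_cast
    calc (1+(k:ℝ))^2 ≤ (1+((j:ℝ)+k))^2 := by
          apply pow_le_pow_left₀ (by positivity) (by linarith [Nat.cast_nonneg (α := ℝ) j])
      _ ≤ (1+((j:ℝ)+k))^m := by
          apply pow_le_pow_right₀
            (by linarith [Nat.cast_nonneg (α := ℝ) j, Nat.cast_nonneg (α := ℝ) k]) hm
  rw [mul_one_div]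
  exact div_le_div_of_nonneg_left (by positivity) (by positivity) hb

end TreeHelpers

/-- Uniform sum estimate on a homogeneous tree of degree `q+1`, Hardy-type case: for
`1 ≤ p < 2` with conjugate exponent `p′` (so `1/p′ = 1 - 1/p`, which is `0` when `p = 1`)
and `m ≥ 2`, there is `C > 0` (depending only on `p`, `q`, `m`) such that for all
vertices `o`, `x`,
`∑_y q^{(d(o,x) - d(o,y) - d(x,y))/p′} · q^{(1 - 2/p)·d(x,y)} · (1 + d(x,y))^{-m} ≤ C`,
the family being summable. -/
theorem stmt17 (q : ℕ) (hq : 2 ≤ q) (p : ℝ) (hp1 : 1 ≤ p) (hp2 : p < 2)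
    (m : ℕ) (hm : 2 ≤ m)
    (X : Type*) (G : SimpleGraph X) (hconn : G.Connected) (hacyc : G.IsAcyclic)
    (hdeg : ∀ v : X, (G.neighborSet v).ncard = q + 1) :
    ∃ C : ℝ, 0 < C ∧ ∀ o x : X,
      Summable (fun y : X =>
        (q : ℝ) ^ (((G.dist o x : ℝ) - (G.dist o y : ℝ) - (G.dist x y : ℝ)) * (1 - 1 / p)) *
          (q : ℝ) ^ ((1 - 2 / p) * (G.dist x y : ℝ)) / (1 + (G.dist x y : ℝ)) ^ m) ∧
      ∑' y : X,
        (q : ℝ) ^ (((G.dist o x : ℝ) - (G.dist o y : ℝ) - (G.dist x y : ℝ)) * (1 - 1 / p)) *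
          (q : ℝ) ^ ((1 - 2 / p) * (G.dist x y : ℝ)) / (1 + (G.dist x y : ℝ)) ^ m ≤ C := by
  classical
  have hq0 : (0:ℝ) < q := by positivity
  have hq1 : (2:ℝ) ≤ q := by exact_mod_cast hq
  have hp0 : 0 < p := by linarith
  set s : ℝ := (q:ℝ)^(1-2/p) with hs
  set H : ℕ × ℕ → ℝ := fun nk => if nk.2 ≤ nk.1 then
      (2*((q:ℝ)+1)) * s^(nk.1-nk.2) / (1+(nk.1:ℝ))^m else 0 with hH
  have hHsum : Summable H := Hsummable hq hp1 hp2 hm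
  have hHnn : ∀ nk, 0 ≤ H nk := by
    intro nk
    rw [hH]
    dsimp only
    split
    · positivity
    · exact le_rfl
  have htsumnn : 0 ≤ ∑' nk, H nk := tsum_nonneg hHnn
  refine ⟨∑' nk, H nk + 1, by linarith, ?_⟩
  intro o x
  set f : X → ℝ := fun y =>
      (q : ℝ) ^ (((G.dist o x : ℝ) - (G.dist o y : ℝ) - (G.dist x y : ℝ)) * (1 - 1 / p)) *
        (q : ℝ) ^ ((1 - 2 / p) * (G.dist x y : ℝ)) / (1 + (G.dist x y : ℝ)) ^ m with hf
  have hfnn : ∀ y, 0 ≤ f y := by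
    intro y
    rw [hf]
    positivity
  obtain ⟨P, hP, hPlen⟩ := hconn.exists_path_of_dist x o
  choose c hc1 hc2 hc3 using med_dist hconn hacyc P hP
  set ind : X → ℕ × ℕ := fun y => (G.dist x y, G.dist x y - c y) with hind
  have key : ∀ u : Finset X, ∑ y ∈ u, f y ≤ ∑' nk, H nk := by
    intro u
    rw [← Finset.sum_fiberwise_of_maps_to (g := ind) (t := u.image ind)
      (fun y hy => Finset.mem_image_of_mem ind hy) f]
    have inner : ∀ nk ∈ u.image ind,
        ∑ y ∈ u.filter (fun y => ind y = nk), f y ≤ H nk := by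
      rintro ⟨n, k⟩ hnk
      obtain ⟨y0, hy0u, hy0⟩ := Finset.mem_image.mp hnk
      have hkn : k ≤ n := by
        have h1 : G.dist x y0 = n := congrArg Prod.fst hy0
        have h2 : G.dist x y0 - c y0 = k := congrArg Prod.snd hy0
        have := hc1 y0
        omega
      set z : X := P.getVert (n - k) with hz
      obtain ⟨F, hF1, hF2⟩ := ball_bound hconn hq hdeg z k
      have hfibsub : u.filter (fun y => ind y = (n, k)) ⊆ F := by
        intro y hy
        obtain ⟨hyu, hyind⟩ := Finset.mem_filter.mp hy
        have hy1 : G.dist x y = n := congrArg Prod.fst hyind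
        have hy2 : G.dist x y - c y = k := congrArg Prod.snd hyind
        have hcy : c y = n - k := by
          have := hc1 y
          omega
        apply hF1
        have hthis := hc3 y
        rw [hcy, hy1] at hthis
        show G.dist (P.getVert (n - k)) y ≤ k
        omega
      set g : ℝ := (q:ℝ) ^ ((-(2*(k:ℝ))) * (1 - 1/p)) *
        (q:ℝ) ^ ((1 - 2/p) * (n:ℝ)) / (1 + (n:ℝ))^m with hg
      have hgnn : 0 ≤ g := by rw [hg]; positivity
      have hval : ∀ y ∈ u.filter (fun y => ind y = (n, k)), f y = g := by
        intro y hy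
        obtain ⟨hyu, hyind⟩ := Finset.mem_filter.mp hy
        have hy1 : G.dist x y = n := congrArg Prod.fst hyind
        have hcy : c y = n - k := by
          have h2 : G.dist x y - c y = k := congrArg Prod.snd hyind
          have := hc1 y
          omega
        have hdoy : (G.dist o y : ℝ) + 2*((n:ℝ) - k) = (G.dist x o : ℝ) + n := by
          have h2 := hc2 y
          rw [hcy, hy1] at h2
          have : ((G.dist o y + 2 * (n - k) : ℕ) : ℝ) = ((G.dist x o + n : ℕ) : ℝ) := by
            exact_mod_cast congrArg (Nat.cast : ℕ → ℝ) h2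
          push_cast [Nat.cast_sub hkn] at this
          linarith
        have hde : (G.dist o x : ℝ) - (G.dist o y : ℝ) - (G.dist x y : ℝ) = -(2*(k:ℝ)) := by
          rw [hy1, SimpleGraph.dist_comm (u := o) (v := x)]
          linarith
        rw [hf, hg]
        dsimp only
        rw [hde, hy1]
      have hcardle : ((u.filter (fun y => ind y = (n, k))).card : ℝ)
          ≤ ((2 * ((q+1) * q^k) : ℕ) : ℝ) := by
        exact_mod_cast le_trans (Finset.card_le_card hfibsub) hF2
      have hexp_eq : (q:ℝ)^(k:ℕ) * ((q:ℝ) ^ ((-(2*(k:ℝ))) * (1 - 1/p)) *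
          (q:ℝ) ^ ((1 - 2/p) * (n:ℝ))) = s^(n-k:ℕ) := by
        rw [hs, ← Real.rpow_natCast ((q:ℝ)^(1-2/p)) (n-k), ← Real.rpow_mul hq0.le,
          ← Real.rpow_natCast (q:ℝ) k, ← Real.rpow_add hq0, ← Real.rpow_add hq0,
          Nat.cast_sub hkn]
        congr 1
        field_simp
        ring
      have hHval : H (n, k) = (2*((q:ℝ)+1)) * s^(n-k:ℕ) / (1+(n:ℝ))^m := by
        rw [hH]
        simp only [hkn, if_pos]
      calc ∑ y ∈ u.filter (fun y => ind y = (n, k)), f y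
          = ∑ _y ∈ u.filter (fun y => ind y = (n, k)), g := Finset.sum_congr rfl hval
        _ = ((u.filter (fun y => ind y = (n, k))).card : ℝ) * g := by
            rw [Finset.sum_const, nsmul_eq_mul]
        _ ≤ ((2 * ((q+1) * q^k) : ℕ) : ℝ) * g := mul_le_mul_of_nonneg_right hcardle hgnn
        _ = H (n, k) := by
            rw [hHval, hg]
            push_cast
            rw [← hexp_eq]
            ring
    calc ∑ nk ∈ u.image ind, ∑ y ∈ u.filter (fun y => ind y = nk), f y
        ≤ ∑ nk ∈ u.image ind, H nk := Finset.sum_le_sum inner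
      _ ≤ ∑' nk, H nk := Summable.sum_le_tsum _ (fun _ _ => hHnn _) hHsum
  have hsummable : Summable f := summable_of_sum_le (fun y => hfnn y) key
  refine ⟨hsummable, ?_⟩
  have := Summable.tsum_le_of_sum_le hsummable key
  calc ∑' y, f y ≤ ∑' nk, H nk := this
    _ ≤ ∑' nk, H nk + 1 := by linarith
end
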